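/- For a partially ordered group (G,P) the following are equivalent: (i) (G,P) is lattice ordered, i.e. every pair of elements of G has a least upper bound; (ii) (G,P) is quasi-lattice ordered and G = PP⁻¹; (iii) (G,P) is quasi-lattice ordered, P generates G as a group, and aP ∩ bP ≠ ∅ for all a, b ∈ P. -/
import Mathlib


section Order

variable {H : Type*} [Group H]

/-- `x ≤ y` in the left-invariant partial order determined by the cone `P`. -/
def lle (P : Submonoid H) (x y : H) : Prop := x⁻¹ * y ∈ P

/-- `x ≤ᵣ y` in the right-invariant partial order determined by the cone `P`. -/
def rle (P : Submonoid H) (x y : H) : Prop := y * x⁻¹ ∈ P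

/-- `x` and `y` have a common upper bound for the left-invariant order. -/
def HasUB (P : Submonoid H) (x y : H) : Prop := ∃ z, lle P x z ∧ lle P y z

/-- `m` is a least upper bound of `x` and `y` for the left-invariant order. -/
def IsLub' (P : Submonoid H) (x y m : H) : Prop :=
  lle P x m ∧ lle P y m ∧ ∀ w, lle P x w → lle P y w → lle P m w

/-- `w` is a greatest lower bound of `u` and `v` for the right-invariant order
(greatest among *all* common right lower bounds in the group). -/
def IsRGlb (P : Submonoid H) (u v w : H) : Prop :=
  rle P w u ∧ rle P w v ∧ ∀ z, rle P z u → rle P z v → rle P z w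

/-- `(H,P)` is a partially ordered group: `P ∩ P⁻¹ = {1}`. -/
def IsPoGroup (P : Submonoid H) : Prop := ∀ x : H, x ∈ P → x⁻¹ ∈ P → x = 1

/-- `(H,P)` is a quasi-lattice ordered group: it is a partially ordered group in which
every pair of elements with a common upper bound has a least upper bound. -/
def IsQLO (P : Submonoid H) : Prop :=
  IsPoGroup P ∧ ∀ x y : H, HasUB P x y → ∃ m, IsLub' P x y m

end Order

/-- Lemma 6.2. For a partially ordered group `(H,P)` the following
are equivalent: (i) `(H,P)` is lattice ordered (every pair of elements of `H` has a
least upper bound); (ii) `(H,P)` is quasi-lattice ordered and `H = PP⁻¹`; (iii) `(H,P)`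
is quasi-lattice ordered, `P` generates `H` as a group, and `aP ∩ bP ≠ ∅` for all
`a, b ∈ P`. -/
theorem lattice_order_tfae {H : Type*} [Group H] (P : Submonoid H)
    (hpo : IsPoGroup P) :
    [ (∀ x y : H, ∃ m, IsLub' P x y m),
      ((∀ x y : H, HasUB P x y → ∃ m, IsLub' P x y m) ∧
        ∀ x : H, ∃ u ∈ P, ∃ v ∈ P, x = u * v⁻¹),
      ((∀ x y : H, HasUB P x y → ∃ m, IsLub' P x y m) ∧
        Subgroup.closure (P : Set H) = ⊤ ∧
        ∀ a ∈ P, ∀ b ∈ P, ∃ p ∈ P, ∃ q ∈ P, a * p = b * q) ].TFAE := by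

  tfae_have 1 → 2 := by
    intro h
    refine ⟨fun x y _ => h x y, fun x => ?_⟩
    obtain ⟨m, hm1, hm2, -⟩ := h x 1
    simp only [lle, inv_one, one_mul] at hm2
    refine ⟨m, hm2, x⁻¹ * m, hm1, by group⟩
  tfae_have 2 → 3 := by
    rintro ⟨hq, hpp⟩
    refine ⟨hq, ?_, ?_⟩
    · rw [eq_top_iff]
      intro x _
      obtain ⟨u, hu, v, hv, rfl⟩ := hpp x
      exact mul_mem (Subgroup.subset_closure hu)
        (inv_mem (Subgroup.subset_closure hv))
    · intro a ha b hb
      obtain ⟨u, hu, v, hv, huv⟩ := hpp (a⁻¹ * b)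
      refine ⟨u, hu, v, hv, ?_⟩
      calc a * u = a * (u * v⁻¹) * v := by group
        _ = a * (a⁻¹ * b) * v := by rw [huv]
        _ = b * v := by group
  tfae_have 3 → 1 := by
    rintro ⟨hq, hcl, hint⟩
    have hS : ∀ x : H, ∃ u ∈ P, ∃ v ∈ P, x = u * v⁻¹ := by
      let S : Subgroup H :=
        { carrier := {x | ∃ u ∈ P, ∃ v ∈ P, x = u * v⁻¹}
          one_mem' := ⟨1, one_mem P, 1, one_mem P, by group⟩
          mul_mem' := by
            rintro x y ⟨u, hu, v, hv, rfl⟩ ⟨s, hs, t, ht, rfl⟩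
            obtain ⟨p, hp, q, hq', hpq⟩ := hint v hv s hs
            refine ⟨u * p, mul_mem hu hp, t * q, mul_mem ht hq', ?_⟩
            have h2 : v⁻¹ * s = p * q⁻¹ := by
              apply mul_left_cancel (a := v)
              apply mul_right_cancel (b := q)
              calc v * (v⁻¹ * s) * q = s * q := by group
                _ = v * p := hpq.symm
                _ = v * (p * q⁻¹) * q := by group
            calc u * v⁻¹ * (s * t⁻¹) = u * (v⁻¹ * s) * t⁻¹ := by group
              _ = u * (p * q⁻¹) * t⁻¹ := by rw [h2]
              _ = u * p * (t * q)⁻¹ := by group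
          inv_mem' := by
            rintro x ⟨u, hu, v, hv, rfl⟩
            exact ⟨v, hv, u, hu, by group⟩ }
      intro x
      have : x ∈ S := by
        have : (Subgroup.closure (P : Set H)) ≤ S :=
          Subgroup.closure_le S |>.mpr (fun p hp => ⟨p, hp, 1, one_mem P, by group⟩)
        exact this (hcl ▸ Subgroup.mem_top x)
      exact this
    intro x y
    obtain ⟨u, hu, v, hv, huv⟩ := hS (x⁻¹ * y)
    refine hq x y ⟨x * u, ?_, ?_⟩
    · simp [lle, hu]
    · have : y⁻¹ * (x * u) = v := by
        calc y⁻¹ * (x * u) = y⁻¹ * x * (u * v⁻¹) * v := by group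
          _ = y⁻¹ * x * (x⁻¹ * y) * v := by rw [huv]
          _ = v := by group
      simpa [lle, this] using hv
  tfae_finish
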